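/- Let N be a positive integer, let X_1,…,X_N be {0,1}-valued random variables, and let p_1,…,p_N ∈ (0,1) be such that for every k ∈ [N], E[X_k | X_1,…,X_{k−1}] ≤ p_k almost surely. Set X = Σ_{i=1}^N X_i and μ = Σ_{k=1}^N p_k. Then for every Δ > 0, Pr[X ≥ μ + Δ] ≤ exp(−Δ² / (2μ + 2Δ)). -/

import Mathlib

open MeasureTheory

-- analytic lemma
lemma chernoff_calc_aux {M Δ : ℝ} (hM : 0 < M) (hΔ : 0 < Δ) :
    -(Δ / (M + Δ)) * (M + Δ) + (Real.exp (Δ / (M + Δ)) - 1) * M ≤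
      -Δ ^ 2 / (2 * M + 2 * Δ) := by
  set t : ℝ := Δ / (M + Δ) with ht_def
  have hMΔ : 0 < M + Δ := by linarith
  have ht0 : 0 < t := div_pos hΔ hMΔ
  have ht1 : t < 1 := by
    rw [ht_def, div_lt_one hMΔ]; linarith
  have ht : t * (M + Δ) = Δ := by
    rw [ht_def]; field_simp
  have hb := Real.exp_bound' ht0.le ht1.le (n := 3) (by norm_num)
  have hb' : Real.exp t ≤ 1 + t + t ^ 2 / 2 + (2 / 9) * t ^ 3 := by
    have : ∑ m ∈ Finset.range 3, t ^ m / m.factorial = 1 + t + t ^ 2 / 2 := by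
      norm_num [Finset.sum_range_succ, Nat.factorial]
    rw [this] at hb
    calc Real.exp t ≤ 1 + t + t ^ 2 / 2 + t ^ 3 * (3 + 1) / (Nat.factorial 3 * 3) := hb
    _ = 1 + t + t ^ 2 / 2 + (2 / 9) * t ^ 3 := by norm_num [Nat.factorial]; ring
  have h2 : -Δ ^ 2 / (2 * M + 2 * Δ) = -(t * Δ / 2) := by
    rw [ht_def]; field_simp
  rw [h2]
  have ht1' : t * M = Δ - t * Δ := by linear_combination ht
  have ht2 : t ^ 2 * M = t * Δ - t ^ 2 * Δ := by linear_combination t * ht1'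
  have ht3 : t ^ 3 * M = t ^ 2 * Δ - t ^ 3 * Δ := by linear_combination t * ht2
  have hbM : (Real.exp t - 1) * M ≤ (t + t ^ 2 / 2 + (2 / 9) * t ^ 3) * M := by
    have : Real.exp t - 1 ≤ t + t ^ 2 / 2 + (2 / 9) * t ^ 3 := by linarith
    exact mul_le_mul_of_nonneg_right this hM.le
  have hq1 : 0 ≤ t ^ 2 * Δ := by positivity
  have hq2 : 0 ≤ t ^ 3 * Δ := by positivity
  nlinarith [hbM, ht1', ht2, ht3, ht]


section Main

variable {Ω : Type*} [MeasurableSpace Ω] (μ : Measure Ω) [IsProbabilityMeasure μ]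

/-- Product MGF bound by induction over the conditional structure. -/
lemma prod_mgf_bound (N : ℕ) (X : Fin N → Ω → ℝ)
    (hXmeas : ∀ k, Measurable (X k))
    (hX01 : ∀ k ω, X k ω = 0 ∨ X k ω = 1)
    (p : Fin N → ℝ) (hp0 : ∀ k, 0 ≤ p k)
    (hcond : ∀ k : Fin N, ∀ᵐ ω ∂μ,
      (μ[X k | ⨆ i : {i : Fin N // i < k}, MeasurableSpace.comap (X i.1) Real.measurableSpace]) ω
        ≤ p k)
    (c : ℝ) (hc : 0 < c) (m : ℕ) (hm : m ≤ N) :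
    ∫ ω, ∏ i ∈ Finset.univ.filter (fun i : Fin N => i.val < m), (1 + c * X i ω) ∂μ ≤
      ∏ i ∈ Finset.univ.filter (fun i : Fin N => i.val < m), (1 + c * p i) := by
  have hfac_nonneg : ∀ (i : Fin N) ω, 0 ≤ 1 + c * X i ω := by
    intro i ω; rcases hX01 i ω with h | h <;> rw [h] <;> nlinarith
  have hfac_le : ∀ (i : Fin N) ω, 1 + c * X i ω ≤ 1 + c := by
    intro i ω; rcases hX01 i ω with h | h <;> rw [h] <;> nlinarith
  have hmeas_prod : ∀ s : Finset (Fin N), Measurable (fun ω => ∏ i ∈ s, (1 + c * X i ω)) := by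
    intro s
    exact Finset.measurable_prod s fun i _ => (measurable_const.add ((hXmeas i).const_mul c))
  have hint : ∀ s : Finset (Fin N),
      Integrable (fun ω => ∏ i ∈ s, (1 + c * X i ω)) μ := by
    intro s
    refine Integrable.mono' (integrable_const ((1 + c) ^ N)) (hmeas_prod s).aestronglyMeasurable
      (Filter.Eventually.of_forall fun ω => ?_)
    rw [Real.norm_eq_abs, abs_of_nonneg (Finset.prod_nonneg fun i _ => hfac_nonneg i ω)]
    calc ∏ i ∈ s, (1 + c * X i ω) ≤ ∏ _i ∈ s, (1 + c) :=
          Finset.prod_le_prod (fun i _ => hfac_nonneg i ω) (fun i _ => hfac_le i ω)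
      _ = (1 + c) ^ s.card := by rw [Finset.prod_const]
      _ ≤ (1 + c) ^ N := by
          apply pow_le_pow_right₀ (by linarith)
          simpa [Fintype.card_fin] using Finset.card_le_univ s
  induction m with
  | zero => simp
  | succ m ih =>
    have hmN : m < N := hm
    set k : Fin N := ⟨m, hmN⟩ with hk_def
    have hFle : (⨆ i : {i : Fin N // i < k}, MeasurableSpace.comap (X i.1)
        Real.measurableSpace) ≤ (inferInstance : MeasurableSpace Ω) :=
      iSup_le fun i => measurable_iff_comap_le.mp (hXmeas i.1)
    set 𝔪 : MeasurableSpace Ω :=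
      ⨆ i : {i : Fin N // i < k}, MeasurableSpace.comap (X i.1) Real.measurableSpace with h𝔪
    haveI : SigmaFinite (μ.trim hFle) := by infer_instance
    set Y : Ω → ℝ := fun ω => ∏ i ∈ Finset.univ.filter (fun i : Fin N => i.val < m),
      (1 + c * X i ω) with hY_def
    set Z : Ω → ℝ := fun ω => 1 + c * X k ω with hZ_def
    have hfilter : Finset.univ.filter (fun i : Fin N => i.val < m + 1) =
        insert k (Finset.univ.filter (fun i : Fin N => i.val < m)) := by
      ext i
      simp only [Finset.mem_filter, Finset.mem_univ, true_and, Finset.mem_insert]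
      constructor
      · intro h
        rcases Nat.lt_succ_iff_lt_or_eq.mp h with h' | h'
        · exact Or.inr h'
        · exact Or.inl (Fin.ext h')
      · rintro (rfl | h)
        · exact Nat.lt_succ_self m
        · exact Nat.lt_succ_of_lt h
    have hknot : k ∉ Finset.univ.filter (fun i : Fin N => i.val < m) := by
      simp [hk_def]
    have hYmeas : StronglyMeasurable[𝔪] Y := by
      apply Measurable.stronglyMeasurable
      apply Finset.measurable_prod
      intro i hi
      have hik : i < k := by
        simp only [Finset.mem_filter, Finset.mem_univ, true_and] at hi
        exact hi
      have : MeasurableSpace.comap (X i) Real.measurableSpace ≤ 𝔪 :=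
        le_iSup (fun j : {j : Fin N // j < k} =>
          MeasurableSpace.comap (X j.1) Real.measurableSpace) ⟨i, hik⟩
      have hXi : Measurable[𝔪] (X i) := measurable_iff_comap_le.mpr this
      exact measurable_const.add (hXi.const_mul c)
    have hintY : Integrable Y μ := hint _
    have hintZ : Integrable Z μ := by
      refine Integrable.mono' (integrable_const (1 + c))
        ((measurable_const.add ((hXmeas k).const_mul c)).aestronglyMeasurable)
        (Filter.Eventually.of_forall fun ω => ?_)
      rw [Real.norm_eq_abs, abs_of_nonneg (hfac_nonneg k ω)]
      exact hfac_le k ω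
    have hYZ_eq : (fun ω => ∏ i ∈ Finset.univ.filter (fun i : Fin N => i.val < m + 1),
        (1 + c * X i ω)) = Y * Z := by
      funext ω
      rw [hfilter, Finset.prod_insert hknot]
      simp only [Pi.mul_apply, hY_def, hZ_def]
      ring
    have hintYZ : Integrable (Y * Z) μ := by
      rw [← hYZ_eq]; exact hint _
    have hintXk : Integrable (X k) μ := by
      refine Integrable.mono' (integrable_const 1) (hXmeas k).aestronglyMeasurable
        (Filter.Eventually.of_forall fun ω => ?_)
      rcases hX01 k ω with h | h <;> simp [h]
    -- conditional expectation of Z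
    have hZdecomp : Z = (fun _ => (1 : ℝ)) + c • X k := by
      funext ω; simp [hZ_def, mul_comm]
    have hcondZ : μ[Z | 𝔪] =ᵐ[μ] fun ω => 1 + c * (μ[X k | 𝔪]) ω := by
      rw [hZdecomp]
      refine (condExp_add (integrable_const 1) (hintXk.smul c) 𝔪).trans ?_
      have h1 : μ[(fun _ => (1 : ℝ)) | 𝔪] = fun _ => (1 : ℝ) := condExp_const (μ := μ) hFle (1 : ℝ)
      have h2 : μ[c • X k | 𝔪] =ᵐ[μ] c • μ[X k | 𝔪] := condExp_smul c (X k) 𝔪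
      filter_upwards [h2] with ω hω
      simp [h1, hω, mul_comm]
    have hcondZ_le : ∀ᵐ ω ∂μ, (μ[Z | 𝔪]) ω ≤ 1 + c * p k := by
      filter_upwards [hcondZ, hcond k] with ω h1 h2
      rw [h1]
      have : c * (μ[X k | 𝔪]) ω ≤ c * p k := mul_le_mul_of_nonneg_left h2 hc.le
      linarith
    -- Y is a.e. nonneg
    have hYnonneg : ∀ ω, 0 ≤ Y ω := fun ω => Finset.prod_nonneg fun i _ => hfac_nonneg i ω
    -- the key step
    have hstep : ∫ ω, (Y * Z) ω ∂μ ≤ (1 + c * p k) * ∫ ω, Y ω ∂μ := by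
      have e1 : ∫ ω, (Y * Z) ω ∂μ = ∫ ω, (μ[Y * Z | 𝔪]) ω ∂μ :=
        (integral_condExp (μ := μ) (f := Y * Z) hFle).symm
      have e2 : μ[Y * Z | 𝔪] =ᵐ[μ] Y * μ[Z | 𝔪] :=
        condExp_mul_of_stronglyMeasurable_left hYmeas hintYZ hintZ
      rw [e1, integral_congr_ae e2]
      have hint1 : Integrable (Y * μ[Z | 𝔪]) μ := (integrable_condExp).congr e2
      have hint2 : Integrable (fun ω => Y ω * (1 + c * p k)) μ := hintY.mul_const _
      calc ∫ ω, (Y * μ[Z | 𝔪]) ω ∂μ ≤ ∫ ω, Y ω * (1 + c * p k) ∂μ := by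
            refine integral_mono_ae hint1 hint2 ?_
            filter_upwards [hcondZ_le] with ω hω
            exact mul_le_mul_of_nonneg_left hω (hYnonneg ω)
        _ = (1 + c * p k) * ∫ ω, Y ω ∂μ := by rw [integral_mul_const]; ring
    have ihm : ∫ ω, Y ω ∂μ ≤ ∏ i ∈ Finset.univ.filter (fun i : Fin N => i.val < m),
        (1 + c * p i) := ih (Nat.le_of_succ_le hm)
    have hpk : (0 : ℝ) ≤ 1 + c * p k := by nlinarith [hp0 k, hc.le]
    calc ∫ ω, ∏ i ∈ Finset.univ.filter (fun i : Fin N => i.val < m + 1), (1 + c * X i ω) ∂μ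
        = ∫ ω, (Y * Z) ω ∂μ := by rw [hYZ_eq]
      _ ≤ (1 + c * p k) * ∫ ω, Y ω ∂μ := hstep
      _ ≤ (1 + c * p k) * ∏ i ∈ Finset.univ.filter (fun i : Fin N => i.val < m),
            (1 + c * p i) := mul_le_mul_of_nonneg_left ihm hpk
      _ = ∏ i ∈ Finset.univ.filter (fun i : Fin N => i.val < m + 1), (1 + c * p i) := by
          rw [hfilter, Finset.prod_insert hknot]

end Main


open ProbabilityTheory in
/-- Azuma–Hoeffding style inequality for sums of {0,1}-valued random variables with
conditionally bounded means (Lemma 2.6 of the paper). -/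
theorem azuma_style_submartingale_bound
    {Ω : Type*} [MeasurableSpace Ω] (μ : Measure Ω) [IsProbabilityMeasure μ]
    (N : ℕ) (hN : 0 < N) (X : Fin N → Ω → ℝ)
    (hXmeas : ∀ k, Measurable (X k))
    (hX01 : ∀ k ω, X k ω = 0 ∨ X k ω = 1)
    (p : Fin N → ℝ) (hp : ∀ k, p k ∈ Set.Ioo (0 : ℝ) 1)
    (hcond : ∀ k : Fin N, ∀ᵐ ω ∂μ,
      (μ[X k | ⨆ i : {i : Fin N // i < k}, MeasurableSpace.comap (X i.1) Real.measurableSpace]) ω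
        ≤ p k)
    (Δ : ℝ) (hΔ : 0 < Δ) :
    μ {ω | (∑ k, p k) + Δ ≤ ∑ i, X i ω} ≤
      ENNReal.ofReal (Real.exp (-Δ ^ 2 / (2 * (∑ k, p k) + 2 * Δ))) := by
  have hne : Nonempty (Fin N) := Fin.pos_iff_nonempty.mp hN
  have hM : 0 < ∑ k, p k := Finset.sum_pos (fun k _ => (hp k).1) Finset.univ_nonempty
  set M : ℝ := ∑ k, p k with hM_def
  have hMΔ : 0 < M + Δ := by linarith
  set t : ℝ := Δ / (M + Δ) with ht_def
  have ht0 : 0 < t := div_pos hΔ hMΔ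
  set c : ℝ := Real.exp t - 1 with hc_def
  have hc : 0 < c := by
    have := Real.one_lt_exp_iff.mpr ht0
    linarith
  -- pointwise identity exp (t * X i ω) = 1 + c * X i ω
  have hpt : ∀ (i : Fin N) ω, Real.exp (t * X i ω) = 1 + c * X i ω := by
    intro i ω
    rcases hX01 i ω with h | h <;> rw [h] <;> simp [hc_def]
  have hS_eq : ∀ ω, Real.exp (t * ∑ i, X i ω) = ∏ i, (1 + c * X i ω) := by
    intro ω
    rw [Finset.mul_sum, Real.exp_sum]
    exact Finset.prod_congr rfl fun i _ => hpt i ω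
  have hfilter_univ : Finset.univ.filter (fun i : Fin N => i.val < N) = Finset.univ := by
    ext i; simp [i.isLt]
  have hkey := prod_mgf_bound μ N X hXmeas hX01 p (fun k => (hp k).1.le) hcond c hc N le_rfl
  rw [hfilter_univ] at hkey
  -- integrability of the exponential
  have hint_exp : Integrable (fun ω => Real.exp (t * ∑ i, X i ω)) μ := by
    have h1 : Integrable (fun ω => ∏ i, (1 + c * X i ω)) μ := by
      refine Integrable.mono' (integrable_const ((1 + c) ^ N))
        ((Finset.measurable_prod Finset.univ fun i _ =>
          (measurable_const.add ((hXmeas i).const_mul c))).aestronglyMeasurable)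
        (Filter.Eventually.of_forall fun ω => ?_)
      have hnn : ∀ i : Fin N, (0:ℝ) ≤ 1 + c * X i ω := by
        intro i; rcases hX01 i ω with h | h <;> rw [h] <;> nlinarith
      have hle : ∀ i : Fin N, 1 + c * X i ω ≤ 1 + c := by
        intro i; rcases hX01 i ω with h | h <;> rw [h] <;> nlinarith
      rw [Real.norm_eq_abs, abs_of_nonneg (Finset.prod_nonneg fun i _ => hnn i)]
      calc ∏ i, (1 + c * X i ω) ≤ ∏ _i : Fin N, (1 + c) :=
            Finset.prod_le_prod (fun i _ => hnn i) (fun i _ => hle i)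
        _ = (1 + c) ^ N := by rw [Finset.prod_const, Finset.card_univ, Fintype.card_fin]
    exact h1.congr (Filter.Eventually.of_forall fun ω => (hS_eq ω).symm)
  -- mgf bound
  have hmgf : mgf (fun ω => ∑ i, X i ω) μ t ≤ Real.exp (c * M) := by
    have e1 : mgf (fun ω => ∑ i, X i ω) μ t = ∫ ω, ∏ i, (1 + c * X i ω) ∂μ := by
      unfold mgf
      exact integral_congr_ae (Filter.Eventually.of_forall fun ω => hS_eq ω)
    rw [e1]
    refine hkey.trans ?_
    calc ∏ i, (1 + c * p i) ≤ ∏ i, Real.exp (c * p i) := by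
          refine Finset.prod_le_prod (fun i _ => ?_) (fun i _ => ?_)
          · nlinarith [(hp i).1, hc.le]
          · linarith [Real.add_one_le_exp (c * p i)]
      _ = Real.exp (∑ i, c * p i) := (Real.exp_sum _ _).symm
      _ = Real.exp (c * M) := by rw [← Finset.mul_sum]
  -- Chernoff bound
  have hch := measure_ge_le_exp_mul_mgf (X := fun ω => ∑ i, X i ω) (μ := μ) (t := t)
    (M + Δ) ht0.le hint_exp
  have hfinal : (μ {ω | M + Δ ≤ ∑ i, X i ω}).toReal ≤
      Real.exp (-Δ ^ 2 / (2 * M + 2 * Δ)) := by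
    refine hch.trans ?_
    calc Real.exp (-t * (M + Δ)) * mgf (fun ω => ∑ i, X i ω) μ t
        ≤ Real.exp (-t * (M + Δ)) * Real.exp (c * M) := by
          exact mul_le_mul_of_nonneg_left hmgf (Real.exp_pos _).le
      _ = Real.exp (-t * (M + Δ) + c * M) := (Real.exp_add _ _).symm
      _ ≤ Real.exp (-Δ ^ 2 / (2 * M + 2 * Δ)) := by
          rw [Real.exp_le_exp, ht_def, hc_def]
          exact chernoff_calc_aux hM hΔ
  calc μ {ω | M + Δ ≤ ∑ i, X i ω}
      = ENNReal.ofReal (μ {ω | M + Δ ≤ ∑ i, X i ω}).toReal :=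
        (ENNReal.ofReal_toReal (measure_ne_top μ _)).symm
    _ ≤ ENNReal.ofReal (Real.exp (-Δ ^ 2 / (2 * M + 2 * Δ))) :=
        ENNReal.ofReal_le_ofReal hfinal
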